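/- Let a, b, c ∈ ℝ with (a, b, c) ≠ (0, 0, 0), and let H be a real symmetric 2 × 2 matrix that is positive definite or negative definite and satisfies a·H₁₁ + 2b·H₁₂ + c·H₂₂ = 0. Then the determinant of the matrix J = [[a, b], [b, c]] is negative: ac − b² < 0. -/

import Mathlib

lemma key_stmt11 (a b c h00 h01 h11 : ℝ) (h0 : 0 < h00) (h2 : 0 < h11)
    (hd : h01 ^ 2 < h00 * h11) (heq : a * h00 + 2 * b * h01 + c * h11 = 0)
    (hne : ¬(a = 0 ∧ b = 0 ∧ c = 0)) : a * c - b ^ 2 < 0 := by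
  rcases lt_trichotomy (a * c) 0 with h | h | h
  · nlinarith [sq_nonneg b]
  · have hb : b ≠ 0 := by
      rintro rfl
      rcases mul_eq_zero.mp h with ha | hc
      · subst ha
        have hc : c = 0 := by
          have : c * h11 = 0 := by linarith
          exact (mul_eq_zero.mp this).resolve_right (ne_of_gt h2)
        exact hne ⟨rfl, rfl, hc⟩
      · subst hc
        have ha : a = 0 := by
          have : a * h00 = 0 := by linarith
          exact (mul_eq_zero.mp this).resolve_right (ne_of_gt h0)
        exact hne ⟨ha, rfl, rfl⟩
    have hb2 : 0 < b ^ 2 := by positivity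
    nlinarith
  · have e : a * h00 + c * h11 = -(2 * b * h01) := by linarith
    have e2 : (a * h00 + c * h11) ^ 2 = 4 * b ^ 2 * h01 ^ 2 := by rw [e]; ring
    nlinarith [sq_nonneg (a * h00 - c * h11), mul_lt_mul_of_pos_left hd h, sq_nonneg h01]

/-- if `(a,b,c) ≠ (0,0,0)` and a symmetric `2×2` matrix `H` which is
positive definite or negative definite satisfies `a H₁₁ + 2b H₁₂ + c H₂₂ = 0`, then
`det [[a,b],[b,c]] = ac − b² < 0` (hyperbolicity of the defining equation). -/
theorem stmt_11 (a b c : ℝ) (habc : (a, b, c) ≠ (0, 0, 0))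
    (H : Matrix (Fin 2) (Fin 2) ℝ) (hsymm : H 0 1 = H 1 0)
    (hdef : H.PosDef ∨ (-H).PosDef)
    (heq : a * H 0 0 + 2 * b * H 0 1 + c * H 1 1 = 0) :
    a * c - b ^ 2 < 0 := by
  have hne : ¬(a = 0 ∧ b = 0 ∧ c = 0) := by
    rintro ⟨rfl, rfl, rfl⟩; exact habc rfl
  rcases hdef with hP | hP
  · have hdet := hP.det_pos
    rw [Matrix.det_fin_two] at hdet
    have h00 : 0 < H 0 0 := by
      have := hP.dotProduct_mulVec_pos (x := (fun j => if j = 0 then 1 else 0 : Fin 2 → ℝ)) (by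
        intro hz
        have := congrFun hz 0
        simp at this)
      simpa [dotProduct, Matrix.mulVec, Fin.sum_univ_two] using this
    have h11 : 0 < H 1 1 := by
      have := hP.dotProduct_mulVec_pos (x := (fun j => if j = 1 then 1 else 0 : Fin 2 → ℝ)) (by
        intro hz
        have := congrFun hz 1
        simp at this)
      simpa [dotProduct, Matrix.mulVec, Fin.sum_univ_two] using this
    exact key_stmt11 a b c (H 0 0) (H 0 1) (H 1 1) h00 h11 (by rw [← hsymm] at hdet; nlinarith [hdet]) heq hne
  · have hdet := hP.det_pos
    rw [Matrix.det_fin_two] at hdet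
    have h00 : 0 < (-H) 0 0 := by
      have := hP.dotProduct_mulVec_pos (x := (fun j => if j = 0 then 1 else 0 : Fin 2 → ℝ)) (by
        intro hz
        have := congrFun hz 0
        simp at this)
      simpa [dotProduct, Matrix.mulVec, Fin.sum_univ_two] using this
    have h11 : 0 < (-H) 1 1 := by
      have := hP.dotProduct_mulVec_pos (x := (fun j => if j = 1 then 1 else 0 : Fin 2 → ℝ)) (by
        intro hz
        have := congrFun hz 1
        simp at this)
      simpa [dotProduct, Matrix.mulVec, Fin.sum_univ_two] using this
    have h00' : 0 < -H 0 0 := by simpa using h00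
    have h11' : 0 < -H 1 1 := by simpa using h11
    have hdet' : (-H 0 1) ^ 2 < (-H 0 0) * (-H 1 1) := by
      simp only [Matrix.neg_apply] at hdet
      rw [← hsymm] at hdet
      nlinarith [hdet]
    exact key_stmt11 a b c (-H 0 0) (-H 0 1) (-H 1 1) h00' h11' hdet'
      (by linarith) hne
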